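/- The family $\mathcal M=\{E[\int_\tau^T u(r)X(r)\,dr\mid\mathcal F_\tau] : u\in U(\tau,Y)\}$ is closed under pairwise maximization: if $M_1,M_2\in\mathcal M$ then $M_1\vee M_2\in\mathcal M$. -/

import Mathlib

open MeasureTheory Set Filter
open scoped ENNReal

noncomputable section

variable {Ω : Type*} {m0 : MeasurableSpace Ω}

/-- The set `U(τ,Y)` of admissible controls: adapted, `[0,L]`-valued processes `u`
with `∫_τ^T u(s) ds ≤ 1 - Y`. -/
def controlSet (ℱ : MeasureTheory.Filtration ℝ m0) (L T : ℝ) (τ Y : Ω → ℝ) :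
    Set (ℝ → Ω → ℝ) :=
  {u | MeasureTheory.Adapted ℱ u ∧ (∀ s ω, u s ω ∈ Set.Icc 0 L) ∧
    ∀ ω, (∫ s in (τ ω)..T, u s ω) ≤ 1 - Y ω}

/-- Total reward of the control `u`. -/
def payoff (X : ℝ → Ω → ℝ) (T : ℝ) (τ : Ω → ℝ) (u : ℝ → Ω → ℝ) (ω : Ω) : ℝ :=
  ∫ r in (τ ω)..T, u r ω * X r ω

/-- `J` is an essential supremum of the family `S` of random variables. -/
def IsEssSupFamily (μ : MeasureTheory.Measure Ω) (S : Set (Ω → ℝ)) (J : Ω → ℝ) : Prop :=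
  (∀ f ∈ S, f ≤ᵐ[μ] J) ∧ ∀ g : Ω → ℝ, (∀ f ∈ S, f ≤ᵐ[μ] g) → J ≤ᵐ[μ] g

/-- The family of conditional expected rewards `E[∫_τ^T u X | m]`, `u ∈ U(τ,Y)`. -/
def condPayoffs (μ : MeasureTheory.Measure Ω) (m : MeasurableSpace Ω) (X : ℝ → Ω → ℝ)
    (ℱ : MeasureTheory.Filtration ℝ m0) (L T : ℝ) (τ Y : Ω → ℝ) : Set (Ω → ℝ) :=
  {f | ∃ u ∈ controlSet ℱ L T τ Y, f =ᵐ[μ] μ[payoff X T τ u | m]}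

/-- the family `𝓜 = {E[∫_τ^T u X dr | 𝓕_τ] : u ∈ U(τ,Y)}` is
closed under pairwise maximization. -/
theorem condPayoffs_closed_under_max
    (μ : MeasureTheory.Measure Ω) [IsProbabilityMeasure μ]
    (ℱ : MeasureTheory.Filtration ℝ m0)
    (T L p : ℝ) (hT : 0 < T) (hL : 0 < L) (hp : 1 < p)
    (X : ℝ → Ω → ℝ) (hXad : MeasureTheory.Adapted ℱ X)
    (hXnn : ∀ t ω, 0 ≤ X t ω)
    (hXrc : ∀ ω t, ContinuousWithinAt (fun s => X s ω) (Set.Ici t) t)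
    (hXint : MeasureTheory.Integrable (fun ω => ⨆ t ∈ Set.Icc (0:ℝ) T, X t ω ^ p) μ)
    (τ : Ω → ℝ) (hτ : MeasureTheory.IsStoppingTime ℱ (fun ω => (τ ω : WithTop ℝ)))
    (hτT : ∀ ω, τ ω ∈ Set.Icc 0 T)
    (Y : Ω → ℝ) (hY : Measurable[hτ.measurableSpace] Y) (hY1 : ∀ ω, Y ω ≤ 1)
    (M₁ M₂ : Ω → ℝ)
    (hM₁ : M₁ ∈ condPayoffs μ hτ.measurableSpace X ℱ L T τ Y)
    (hM₂ : M₂ ∈ condPayoffs μ hτ.measurableSpace X ℱ L T τ Y) :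
    (fun ω => max (M₁ ω) (M₂ ω)) ∈ condPayoffs μ hτ.measurableSpace X ℱ L T τ Y := by
  obtain ⟨u₁, hu₁, hMeq₁⟩ := hM₁
  obtain ⟨u₂, hu₂, hMeq₂⟩ := hM₂
  set m := hτ.measurableSpace with hm_def
  set f₁ := payoff X T τ u₁ with hf₁
  set f₂ := payoff X T τ u₂ with hf₂
  have hτle : ∀ ω, τ ω ≤ T := fun ω => (hτT ω).2
  have hpos : ∀ (u : ℝ → Ω → ℝ), (∀ s ω, u s ω ∈ Set.Icc 0 L) →
      ∀ ω, 0 ≤ payoff X T τ u ω := by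
    intro u hu ω
    exact intervalIntegral.integral_nonneg (hτle ω)
      (fun r _ => mul_nonneg (hu r ω).1 (hXnn r ω))
  have hE₁nn : 0 ≤ᵐ[μ] μ[f₁|m] :=
    condExp_nonneg (Filter.Eventually.of_forall (hpos u₁ hu₁.2.1))
  have hE₂nn : 0 ≤ᵐ[μ] μ[f₂|m] :=
    condExp_nonneg (Filter.Eventually.of_forall (hpos u₂ hu₂.2.1))
  by_cases h₂ : Integrable f₂ μ
  · by_cases h₁ : Integrable f₁ μ
    · -- main case
      set E₁ := μ[f₁|m] with hE₁
      set E₂ := μ[f₂|m] with hE₂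
      set A : Set Ω := {ω | E₂ ω ≤ E₁ ω} with hA
      have hAm : MeasurableSet[m] A :=
        measurableSet_le stronglyMeasurable_condExp.measurable
          stronglyMeasurable_condExp.measurable
      set u : ℝ → Ω → ℝ := fun r ω => if E₂ ω ≤ E₁ ω ∨ r < τ ω then u₁ r ω else u₂ r ω
        with hu_def
      have hu_eq₁ : ∀ ω ∈ A, ∀ r, u r ω = u₁ r ω := by
        intro ω hω r
        exact if_pos (Or.inl hω)
      have hu_eq₂ : ∀ ω ∉ A, ∀ r ∈ Set.Icc (τ ω) T, u r ω = u₂ r ω := by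
        intro ω hω r hr
        refine if_neg ?_
        push_neg
        exact ⟨lt_of_not_ge hω, hr.1⟩
      have huc : u ∈ controlSet ℱ L T τ Y := by
        refine ⟨?_, ?_, ?_⟩
        · intro r
          have hB : MeasurableSet[ℱ r] {ω | E₂ ω ≤ E₁ ω ∨ r < τ ω} := by
            have h1 : {ω | E₂ ω ≤ E₁ ω ∨ r < τ ω}
                = (A ∩ {ω | τ ω ≤ r}) ∪ {ω | τ ω ≤ r}ᶜ := by
              ext ω'
              simp only [Set.mem_setOf_eq, Set.mem_union, Set.mem_inter_iff,
                Set.mem_compl_iff]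
              constructor
              · rintro (h | h)
                · by_cases hτr : τ ω' ≤ r
                  · exact Or.inl ⟨h, hτr⟩
                  · exact Or.inr hτr
                · exact Or.inr (not_le.mpr h)
              · rintro (⟨h, _⟩ | h)
                · exact Or.inl h
                · exact Or.inr (not_le.mp h)
            rw [h1]
            have hAr := hAm.2 r
            have hτr := hτ r
            simp only [WithTop.coe_le_coe] at hAr hτr
            exact hAr.union hτr.compl
          exact (hu₁.1 r).ite hB (hu₂.1 r)
        · intro s ω
          by_cases h : E₂ ω ≤ E₁ ω ∨ s < τ ω
          · have : u s ω = u₁ s ω := if_pos h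
            rw [this]; exact hu₁.2.1 s ω
          · have : u s ω = u₂ s ω := if_neg h
            rw [this]; exact hu₂.2.1 s ω
        · intro ω
          by_cases hω : ω ∈ A
          · have : (∫ s in (τ ω)..T, u s ω) = ∫ s in (τ ω)..T, u₁ s ω :=
              intervalIntegral.integral_congr (fun r _ => hu_eq₁ ω hω r)
            rw [this]; exact hu₁.2.2 ω
          · have : (∫ s in (τ ω)..T, u s ω) = ∫ s in (τ ω)..T, u₂ s ω :=
              intervalIntegral.integral_congr (fun r hr =>
                hu_eq₂ ω hω r (by rwa [Set.uIcc_of_le (hτle ω)] at hr))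
            rw [this]; exact hu₂.2.2 ω
      refine ⟨u, huc, ?_⟩
      have hpay : payoff X T τ u = A.indicator f₁ + Aᶜ.indicator f₂ := by
        funext ω
        by_cases hω : ω ∈ A
        · have h0 : payoff X T τ u ω = f₁ ω :=
            intervalIntegral.integral_congr (fun r _ => by
              show u r ω * X r ω = u₁ r ω * X r ω
              rw [hu_eq₁ ω hω r])
          rw [h0, Pi.add_apply, Set.indicator_of_mem hω,
            Set.indicator_of_notMem (Set.notMem_compl_iff.mpr hω), add_zero]
        · have h0 : payoff X T τ u ω = f₂ ω :=
            intervalIntegral.integral_congr (fun r hr => by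
              show u r ω * X r ω = u₂ r ω * X r ω
              rw [hu_eq₂ ω hω r (by rwa [Set.uIcc_of_le (hτle ω)] at hr)])
          rw [h0, Pi.add_apply, Set.indicator_of_notMem hω,
            Set.indicator_of_mem (Set.mem_compl hω), zero_add]
      have hm_le : m ≤ m0 := hτ.measurableSpace_le
      have hA0 : MeasurableSet[m0] A := hm_le _ hAm
      have hint₁ : Integrable (A.indicator f₁) μ :=
        h₁.indicator hA0
      have hint₂ : Integrable (Aᶜ.indicator f₂) μ :=
        h₂.indicator hA0.compl
      have hcond : μ[payoff X T τ u|m] =ᵐ[μ]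
          fun ω => A.indicator E₁ ω + Aᶜ.indicator E₂ ω := by
        rw [hpay]
        refine (condExp_add hint₁ hint₂ m).trans ?_
        filter_upwards [condExp_indicator h₁ hAm, condExp_indicator h₂ hAm.compl] with ω h1 h2
        rw [Pi.add_apply, h1, h2]
      refine EventuallyEq.trans ?_ hcond.symm
      filter_upwards [hMeq₁, hMeq₂] with ω h1 h2
      by_cases hω : ω ∈ A
      · have hle : E₂ ω ≤ E₁ ω := hω
        rw [Set.indicator_of_mem hω, Set.indicator_of_notMem (Set.notMem_compl_iff.mpr hω),
          add_zero, h1, h2]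
        exact max_eq_left hle
      · have hlt : E₁ ω < E₂ ω := lt_of_not_ge hω
        rw [Set.indicator_of_notMem hω, Set.indicator_of_mem (Set.mem_compl hω),
          zero_add, h1, h2]
        exact max_eq_right hlt.le
    · refine ⟨u₂, hu₂, ?_⟩
      have hz : μ[f₁|m] = 0 := condExp_of_not_integrable h₁
      filter_upwards [hMeq₁, hMeq₂, hE₂nn] with ω h1 h2 h3
      rw [h1, h2, hz]
      exact max_eq_right h3
  · refine ⟨u₁, hu₁, ?_⟩
    have hz : μ[f₂|m] = 0 := condExp_of_not_integrable h₂
    filter_upwards [hMeq₁, hMeq₂, hE₁nn] with ω h1 h2 h3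
    rw [h1, h2, hz]
    exact max_eq_left h3
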